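/- Let α ∈ ℝ and ξ, η ∈ ℝ with ξ ≠ η, ξ² + α ≥ 0 and η² + α ≥ 0. Write s = √(ξ² + α) and u = √(η² + α). Then ((s·u + ξη + α)/(η − ξ))² = α·((s + u)/(η − ξ))² + ((η·s + ξ·u)/(η − ξ))² − α. In other words, with moment maps x = (s + u)/(η − ξ), y = (η·s + ξ·u)/(η − ξ) and square norm e^{2μ} = ((s·u + ξη + α)/(η − ξ))², one has e^{2μ} = α·x² + y² − α, a quadratic polynomial in the moment maps. -/
import Mathlib


/-- for the general family with `R(z) = z² + α`, the square norm of
the twistor 2-form is quadratic in the moment maps: `e^{2μ} = α·x² + y² − α`. -/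
theorem stmt_8 (α ξ η : ℝ) (hne : ξ ≠ η)
    (hξ : 0 ≤ ξ ^ 2 + α) (hη : 0 ≤ η ^ 2 + α) :
    ((Real.sqrt (ξ ^ 2 + α) * Real.sqrt (η ^ 2 + α) + ξ * η + α) / (η - ξ)) ^ 2
      = α * ((Real.sqrt (ξ ^ 2 + α) + Real.sqrt (η ^ 2 + α)) / (η - ξ)) ^ 2
        + ((η * Real.sqrt (ξ ^ 2 + α) + ξ * Real.sqrt (η ^ 2 + α)) / (η - ξ)) ^ 2
        - α := by
  have hd : η - ξ ≠ 0 := sub_ne_zero.mpr (Ne.symm hne)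
  have hs : Real.sqrt (ξ ^ 2 + α) ^ 2 = ξ ^ 2 + α := Real.sq_sqrt hξ
  have hu : Real.sqrt (η ^ 2 + α) ^ 2 = η ^ 2 + α := Real.sq_sqrt hη
  set s := Real.sqrt (ξ ^ 2 + α)
  set u := Real.sqrt (η ^ 2 + α)
  field_simp
  nlinarith [sq_nonneg (s*u), sq_nonneg (s+u), hs, hu, sq_nonneg (η - ξ)]
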